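/- There exists a set X of 240 unit vectors in ℝ^8 such that X is closed under negation (x ∈ X implies −x ∈ X) and for any two distinct non-antipodal x, x' ∈ X (i.e., x ≠ x' and x ≠ −x') the inner product ⟨x, x'⟩ belongs to {0, 1/2, −1/2}. -/

import Mathlib

open RealInnerProductSpace

def sgn (b : Bool) : ℤ := if b then 1 else -1

abbrev Par := (Fin 8 × Fin 8 × Bool × Bool) ⊕ (Fin 8 → Bool)

def gen : Par → (Fin 8 → ℤ)
| .inl (i, j, s, t) => fun k => if k = i then 2 * sgn s else if k = j then 2 * sgn t else 0
| .inr s => fun k => sgn (s k)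

def ok : Par → Bool
| .inl (i, j, _, _) => decide (i < j)
| .inr s => (∑ k, sgn (s k)) % 4 == 0

def dot (w w' : Fin 8 → ℤ) : ℤ := ∑ i, w i * w' i

def S : Finset (Fin 8 → ℤ) := (Finset.univ.filter (fun p => ok p)).image gen

set_option maxRecDepth 40000 in
set_option maxHeartbeats 4000000 in
lemma cardS : S.card = 240 := by decide

set_option maxRecDepth 40000 in
set_option maxHeartbeats 4000000 in
lemma norm8 : ∀ p, ok p → dot (gen p) (gen p) = 8 := by decide

def negP : Par → Par
| .inl (i, j, s, t) => .inl (i, j, !s, !t)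
| .inr s => .inr (fun k => !(s k))

set_option maxRecDepth 40000 in
set_option maxHeartbeats 4000000 in
lemma negP_ok : ∀ p, ok p → ok (negP p) ∧ ∀ k, gen (negP p) k = - gen p k := by decide

lemma key_div : ∀ p, ok p → ∀ q, ok q → 4 ∣ dot (gen p) (gen q) := by
  have hsgn : ∀ a b : Bool, 4 ∣ (sgn a * sgn b - sgn a - sgn b + 1) := by decide
  rintro (⟨i, j, s, t⟩ | u) hp (⟨i', j', s', t'⟩ | v) hq
  · apply Finset.dvd_sum
    intro k _
    have h1 : 2 ∣ gen (.inl (i, j, s, t)) k := by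
      simp only [gen]; split <;> [skip; split] <;> simp [sgn] <;> split <;> decide
    have h2 : 2 ∣ gen (.inl (i', j', s', t')) k := by
      simp only [gen]; split <;> [skip; split] <;> simp [sgn] <;> split <;> decide
    obtain ⟨a, ha⟩ := h1; obtain ⟨b, hb⟩ := h2
    exact ⟨a * b, by rw [ha, hb]; ring⟩
  · have hij : i ≠ j := by simp [ok] at hp; exact Fin.ne_of_lt hp
    have : dot (gen (.inl (i, j, s, t))) (gen (.inr v))
        = ∑ k ∈ ({i, j} : Finset (Fin 8)), gen (.inl (i, j, s, t)) k * gen (.inr v) k := by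
      rw [dot]
      refine (Finset.sum_subset (Finset.subset_univ _) ?_).symm
      intro k _ hk
      simp only [Finset.mem_insert, Finset.mem_singleton, not_or] at hk
      simp [gen, hk.1, hk.2]
    rw [this, Finset.sum_pair hij]
    simp only [gen, if_pos rfl, if_neg hij.symm, if_pos rfl]
    rcases s <;> rcases t <;> rcases hvi : v i <;> rcases hvj : v j <;> simp [sgn]
  · have hij : i' ≠ j' := by simp [ok] at hq; exact Fin.ne_of_lt hq
    have : dot (gen (.inr u)) (gen (.inl (i', j', s', t')))
        = ∑ k ∈ ({i', j'} : Finset (Fin 8)), gen (.inr u) k * gen (.inl (i', j', s', t')) k := by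
      rw [dot]
      refine (Finset.sum_subset (Finset.subset_univ _) ?_).symm
      intro k _ hk
      simp only [Finset.mem_insert, Finset.mem_singleton, not_or] at hk
      simp [gen, hk.1, hk.2]
    rw [this, Finset.sum_pair hij]
    simp only [gen, if_pos rfl, if_neg hij.symm, if_pos rfl]
    rcases s' <;> rcases t' <;> rcases hvi : u i' <;> rcases hvj : u j' <;> simp [sgn]
  · simp only [ok, beq_iff_eq, ← Int.dvd_iff_emod_eq_zero] at hp hq
    have key : dot (gen (.inr u)) (gen (.inr v))
        = (∑ k, (sgn (u k) * sgn (v k) - sgn (u k) - sgn (v k) + 1))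
          + (∑ k, sgn (u k)) + (∑ k, sgn (v k)) - 8 := by
      simp only [dot, gen]
      rw [Finset.sum_add_distrib, Finset.sum_sub_distrib, Finset.sum_sub_distrib]
      simp [Finset.card_univ]
      ring
    rw [key]
    have h1 : 4 ∣ ∑ k, (sgn (u k) * sgn (v k) - sgn (u k) - sgn (v k) + 1) :=
      Finset.dvd_sum fun k _ => hsgn (u k) (v k)
    omega

noncomputable def emb (w : Fin 8 → ℤ) : EuclideanSpace ℝ (Fin 8) :=
  WithLp.toLp 2 (fun k => (Real.sqrt 2 / 4) * w k)

lemma inner_emb (w w' : Fin 8 → ℤ) : ⟪emb w, emb w'⟫ = (dot w w' : ℝ) / 8 := by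
  simp only [emb, PiLp.inner_apply, PiLp.toLp_apply, RCLike.inner_apply, conj_trivial, dot]
  push_cast
  rw [Finset.sum_div]
  congr 1; funext k
  field_simp
  ring_nf
  rw [Real.sq_sqrt (by norm_num : (2:ℝ) ≥ 0)]
  ring

lemma emb_inj : Function.Injective emb := by
  intro w w' h
  funext k
  have := congrFun (congrArg WithLp.ofLp h) k
  simp only [emb, WithLp.ofLp_toLp] at this
  have hs : Real.sqrt 2 / 4 ≠ 0 := by positivity
  have := mul_left_cancel₀ hs this
  exact_mod_cast this

lemma emb_neg (w : Fin 8 → ℤ) : emb (fun k => - w k) = - emb w := by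
  ext k
  simp only [emb, PiLp.neg_apply, PiLp.toLp_apply]
  push_cast
  ring

lemma norm_emb {w : Fin 8 → ℤ} (h : dot w w = 8) : ‖emb w‖ = 1 := by
  have h1 : ⟪emb w, emb w⟫ = 1 := by rw [inner_emb, h]; norm_num
  have h2 : ‖emb w‖ ^ 2 = 1 := by rw [← real_inner_self_eq_norm_sq, h1]
  nlinarith [norm_nonneg (emb w)]

lemma mem_S {w : Fin 8 → ℤ} (h : w ∈ S) : ∃ p, ok p ∧ gen p = w := by
  simp only [S, Finset.mem_image, Finset.mem_filter, Finset.mem_univ, true_and] at h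
  obtain ⟨p, hp, hw⟩ := h
  exact ⟨p, hp, hw⟩

theorem exists_E8_code :
    ∃ X : Finset (EuclideanSpace ℝ (Fin 8)),
      X.card = 240 ∧
      (∀ x ∈ X, ‖x‖ = 1) ∧
      (∀ x ∈ X, -x ∈ X) ∧
      (∀ x ∈ X, ∀ x' ∈ X, x ≠ x' → x ≠ -x' →
        ⟪x, x'⟫ ∈ ({0, 1 / 2, -(1 / 2)} : Set ℝ)) := by
  classical
  refine ⟨S.image emb, ?_, ?_, ?_, ?_⟩
  · rw [Finset.card_image_of_injective _ emb_inj, cardS]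
  · intro x hx
    obtain ⟨w, hw, rfl⟩ := Finset.mem_image.mp hx
    obtain ⟨p, hp, rfl⟩ := mem_S hw
    exact norm_emb (norm8 p hp)
  · intro x hx
    obtain ⟨w, hw, rfl⟩ := Finset.mem_image.mp hx
    obtain ⟨p, hp, rfl⟩ := mem_S hw
    obtain ⟨hok, hneg⟩ := negP_ok p hp
    have : -emb (gen p) = emb (gen (negP p)) := by
      rw [show gen (negP p) = fun k => - gen p k from funext hneg, emb_neg]
    rw [this]
    apply Finset.mem_image_of_mem
    simp only [S, Finset.mem_image, Finset.mem_filter, Finset.mem_univ, true_and]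
    exact ⟨negP p, hok, rfl⟩
  · intro x hx x' hx' hne hne'
    obtain ⟨w, hw, rfl⟩ := Finset.mem_image.mp hx
    obtain ⟨w', hw', rfl⟩ := Finset.mem_image.mp hx'
    obtain ⟨p, hp, rfl⟩ := mem_S hw
    obtain ⟨q, hq, rfl⟩ := mem_S hw'
    have hnx : ‖emb (gen p)‖ = 1 := norm_emb (norm8 p hp)
    have hnx' : ‖emb (gen q)‖ = 1 := norm_emb (norm8 q hq)
    have hdvd : 4 ∣ dot (gen p) (gen q) := key_div p hp q hq
    have hcs : |⟪emb (gen p), emb (gen q)⟫| ≤ 1 := by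
      calc |⟪emb (gen p), emb (gen q)⟫| ≤ ‖emb (gen p)‖ * ‖emb (gen q)‖ :=
            abs_real_inner_le_norm _ _
        _ = 1 := by rw [hnx, hnx']; norm_num
    rw [inner_emb] at hcs ⊢
    have habs : |dot (gen p) (gen q)| ≤ 8 := by
      have : |(dot (gen p) (gen q) : ℝ)| ≤ 8 := by
        rw [abs_div] at hcs
        simp at hcs
        linarith [abs_nonneg ((dot (gen p) (gen q) : ℝ))]
      exact_mod_cast this
    have hd8 : dot (gen p) (gen q) ≠ 8 := by
      intro h8
      apply hne
      have h1 : ⟪emb (gen p), emb (gen q)⟫ = 1 := by rw [inner_emb, h8]; norm_num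
      exact (inner_eq_one_iff_of_norm_eq_one hnx hnx').mp h1
    have hdm8 : dot (gen p) (gen q) ≠ -8 := by
      intro h8
      apply hne'
      have hnn : ‖-emb (gen q)‖ = 1 := by rwa [norm_neg]
      have h1 : ⟪emb (gen p), -emb (gen q)⟫ = 1 := by
        rw [inner_neg_right, inner_emb, h8]; norm_num
      exact (inner_eq_one_iff_of_norm_eq_one hnx hnn).mp h1
    obtain ⟨m, hm⟩ := hdvd
    rw [hm] at habs hd8 hdm8 ⊢
    have hm2 : m = -1 ∨ m = 0 ∨ m = 1 := by rw [abs_le] at habs; omega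
    rcases hm2 with rfl | rfl | rfl <;>
      simp [Set.mem_insert_iff, Set.mem_singleton_iff] <;> norm_num
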